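/- For every v ∈ N_p, one has I_p(v) ≥ ((p−4)/(4p)) ∫_Ω |f(v)|^p ≥ 0, where I_p(v) = (1/2)∫_Ω |∇v|² − (1/p)∫_Ω |f(v)|^p. -/

import Mathlib

open MeasureTheory

theorem stmt_17
    (N : ℕ) (hN : 3 ≤ N)
    (Ω : Set (EuclideanSpace ℝ (Fin N)))
    (hΩo : IsOpen Ω) (hΩb : Bornology.IsBounded Ω)
    (f : ℝ → ℝ) (hf0 : f 0 = 0) (hodd : ∀ t : ℝ, f (-t) = -f t)
    (hf1 : ∀ t : ℝ, 0 ≤ t → HasDerivAt f ((1 + 2 * f t ^ 2) ^ (-(1/2) : ℝ)) t)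
    (p : ℝ) (hp : 4 < p) (hp2 : p ≤ 4 * (N:ℝ) / ((N:ℝ) - 2))
    (v : EuclideanSpace ℝ (Fin N) → ℝ)
    (hv0 : ¬ (∀ᵐ x ∂(volume.restrict Ω), v x = 0))
    (hint1 : IntegrableOn (fun x => ‖gradient v x‖ ^ 2) Ω volume)
    (hint2 : IntegrableOn (fun x => |f (v x)| ^ p) Ω volume)
    (hint3 : IntegrableOn
      (fun x => |f (v x)| ^ (p - 2) * f (v x) * deriv f (v x) * v x) Ω volume)
    -- v belongs to the Nehari manifold N_p
    (hNehari : ∫ x in Ω, ‖gradient v x‖ ^ 2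
        = ∫ x in Ω, |f (v x)| ^ (p - 2) * f (v x) * deriv f (v x) * v x) :
    ((p - 4) / (4 * p)) * ∫ x in Ω, |f (v x)| ^ p
      ≤ (1/2) * (∫ x in Ω, ‖gradient v x‖ ^ 2) - (1/p) * ∫ x in Ω, |f (v x)| ^ p
    ∧ 0 ≤ ((p - 4) / (4 * p)) * ∫ x in Ω, |f (v x)| ^ p := by
  have hp0 : (0:ℝ) < p := by linarith
  have hu : ∀ s : ℝ, (0:ℝ) < 1 + 2 * s ^ 2 := fun s => by positivity
  -- derivative everywhere (extend to negatives by oddness)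
  have hderiv : ∀ t : ℝ, HasDerivAt f ((1 + 2 * f t ^ 2) ^ (-(1/2) : ℝ)) t := by
    intro t
    rcases le_or_gt 0 t with ht | ht
    · exact hf1 t ht
    · have h := hf1 (-t) (by linarith)
      have h3 := (h.comp t (hasDerivAt_neg t)).neg
      have h2 : HasDerivAt (fun s => -f (-s)) ((1 + 2 * f (-t) ^ 2) ^ (-(1/2) : ℝ)) t := by
        simp only [mul_neg, mul_one, neg_neg] at h3; exact h3
      have heq : (fun s : ℝ => -f (-s)) = f := by
        funext s; rw [hodd s, neg_neg]
      rw [heq] at h2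
      have hsq : f (-t) ^ 2 = f t ^ 2 := by rw [hodd t]; ring
      rwa [hsq] at h2
  have hcpos : ∀ t : ℝ, (0:ℝ) < (1 + 2 * f t ^ 2) ^ (-(1/2) : ℝ) :=
    fun t => Real.rpow_pos_of_pos (hu (f t)) _
  have hmono : StrictMono f :=
    strictMono_of_deriv_pos (fun t => by rw [(hderiv t).deriv]; exact hcpos t)
  have hwpos : ∀ s : ℝ, 0 < Real.sqrt (1 + 2 * s ^ 2) := fun s => Real.sqrt_pos.2 (hu s)
  have hcw : ∀ t : ℝ, (1 + 2 * f t ^ 2) ^ (-(1/2) : ℝ) = (Real.sqrt (1 + 2 * f t ^ 2))⁻¹ := by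
    intro t
    rw [Real.rpow_neg (hu (f t)).le, Real.sqrt_eq_rpow]
  -- key: f t * sqrt(1 + 2 f t ^ 2) ≤ 2 t for t ≥ 0
  have hkey : ∀ t : ℝ, 0 ≤ t → f t * Real.sqrt (1 + 2 * f t ^ 2) ≤ 2 * t := by
    intro t ht
    set g : ℝ → ℝ := fun r => 2 * r - f r * Real.sqrt (1 + 2 * f r ^ 2) with hg
    have hgd : ∀ r : ℝ, HasDerivAt g
        (2 * 1 - (((1 + 2 * f r ^ 2) ^ (-(1/2) : ℝ)) * Real.sqrt (1 + 2 * f r ^ 2)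
          + f r * ((2 * (2 * f r ^ 1 * ((1 + 2 * f r ^ 2) ^ (-(1/2) : ℝ))))
            / (2 * Real.sqrt (1 + 2 * f r ^ 2))))) r := by
      intro r
      have h1 : HasDerivAt (fun r => 1 + 2 * f r ^ 2)
          (2 * (2 * f r ^ 1 * ((1 + 2 * f r ^ 2) ^ (-(1/2) : ℝ)))) r :=
        (((hderiv r).pow 2).const_mul 2).const_add 1
      have h2 := h1.sqrt (ne_of_gt (hu (f r)))
      have h3 := (hderiv r).mul h2
      exact ((hasDerivAt_id r).const_mul 2).sub h3
    have hgnn : ∀ r : ℝ, 0 ≤ deriv g r := by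
      intro r
      rw [(hgd r).deriv, hcw r]
      set s := f r with hs
      set w := Real.sqrt (1 + 2 * s ^ 2) with hwdef
      have hw0 : 0 < w := hwpos s
      have hw2 : w * w = 1 + 2 * s ^ 2 := Real.mul_self_sqrt (hu s).le
      have hexp : 2 * 1 - (w⁻¹ * w + s * (2 * (2 * s ^ 1 * w⁻¹) / (2 * w)))
          = 1 - 2 * s ^ 2 / (w * w) := by
        field_simp
        ring
      rw [hexp, hw2]
      have h4 : 2 * s ^ 2 / (1 + 2 * s ^ 2) ≤ 1 := by
        rw [div_le_one (hu s)]; nlinarith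
      linarith
    have hmonog : Monotone g :=
      monotone_of_deriv_nonneg (fun r => (hgd r).differentiableAt) hgnn
    have h0 : g 0 = 0 := by simp [hg, hf0]
    have h1 := hmonog ht
    rw [h0] at h1
    simp only [hg] at h1
    linarith
  -- pointwise inequality for all t
  have key : ∀ t : ℝ, (1/2) * |f t| ^ p
      ≤ |f t| ^ (p-2) * f t * ((1 + 2 * f t ^ 2) ^ (-(1/2) : ℝ)) * t := by
    have pos : ∀ t : ℝ, 0 < t → (1/2) * |f t| ^ p
        ≤ |f t| ^ (p-2) * f t * ((1 + 2 * f t ^ 2) ^ (-(1/2) : ℝ)) * t := by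
      intro t ht
      have hs : 0 < f t := by have := hmono ht; rwa [hf0] at this
      rw [abs_of_nonneg hs.le, hcw t]
      have hk := hkey t ht.le
      set s := f t with hsdef
      set w := Real.sqrt (1 + 2 * s ^ 2) with hwdef
      have hw0 : 0 < w := hwpos s
      have hsp : s ^ p = s ^ (p-2) * s ^ (2:ℕ) := by
        rw [← Real.rpow_natCast s 2, ← Real.rpow_add hs]
        norm_num
      have h2 : (1/2) * s ^ (2:ℕ) ≤ s * w⁻¹ * t := by
        have e : s * w⁻¹ * t = s * t / w := by field_simp
        rw [e, le_div_iff₀ hw0]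
        nlinarith [hk, hs.le]
      calc (1/2) * s ^ p = s ^ (p-2) * ((1/2) * s ^ (2:ℕ)) := by rw [hsp]; ring
        _ ≤ s ^ (p-2) * (s * w⁻¹ * t) :=
            mul_le_mul_of_nonneg_left h2 (Real.rpow_nonneg hs.le _)
        _ = s ^ (p-2) * s * w⁻¹ * t := by ring
    intro t
    rcases lt_trichotomy t 0 with ht | ht | ht
    · have h1 := pos (-t) (by linarith)
      have hft : f (-t) = -f t := hodd t
      rw [hft] at h1
      simp only [abs_neg, neg_sq] at h1
      calc (1/2) * |f t| ^ p
          ≤ |f t| ^ (p-2) * (-f t) * ((1 + 2 * f t ^ 2) ^ (-(1/2) : ℝ)) * (-t) := h1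
        _ = |f t| ^ (p-2) * f t * ((1 + 2 * f t ^ 2) ^ (-(1/2) : ℝ)) * t := by ring
    · subst ht
      simp [hf0, Real.zero_rpow hp0.ne']
    · exact pos t ht
  -- integrate
  have hBnn : 0 ≤ ∫ x in Ω, |f (v x)| ^ p :=
    integral_nonneg (fun x => Real.rpow_nonneg (abs_nonneg _) _)
  have hle : (1/2) * ∫ x in Ω, |f (v x)| ^ p ≤ ∫ x in Ω, ‖gradient v x‖ ^ 2 := by
    rw [hNehari, ← integral_const_mul]
    refine integral_mono (hint2.const_mul _) hint3 ?_
    intro x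
    dsimp only
    rw [(hderiv (v x)).deriv]
    exact key (v x)
  constructor
  · have e : (p - 4) / (4 * p) * (∫ x in Ω, |f (v x)| ^ p)
        = (1/4) * (∫ x in Ω, |f (v x)| ^ p) - (1/p) * (∫ x in Ω, |f (v x)| ^ p) := by
      field_simp
    rw [e]
    linarith
  · exact mul_nonneg (div_nonneg (by linarith) (by linarith)) hBnn
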